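/- A function f : ℝ → ℝ satisfies f(x - f(x) + f(y)) = f(y) for all x, y ∈ ℝ with range of f equal to [0,1) if and only if there exists a constant c ∈ ℝ such that f(x) = {x - c} for all x ∈ ℝ, where {t} denotes the fractional part of t. -/

import Mathlib

theorem decomposer_range_Ico_iff_shifted_fract (f : ℝ → ℝ) :
    ((∀ x y : ℝ, f (x - f x + f y) = f y) ∧
      Set.range f = Set.Ico (0:ℝ) 1) ↔
    ∃ c : ℝ, ∀ x : ℝ, f x = Int.fract (x - c) := by
  constructor
  · rintro ⟨hfe, hrange⟩
    -- every value of f is in [0,1)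
    have hmem : ∀ x, f x ∈ Set.Ico (0:ℝ) 1 := by
      intro x
      rw [← hrange]
      exact ⟨x, rfl⟩
    -- every t ∈ [0,1) is attained
    have hsurj : ∀ t : ℝ, 0 ≤ t → t < 1 → ∃ y, f y = t := by
      intro t h0 h1
      have : t ∈ Set.range f := by rw [hrange]; exact ⟨h0, h1⟩
      exact this
    -- grid predicate
    set Grid : ℝ → Prop := fun a => ∀ t : ℝ, 0 ≤ t → t < 1 → f (a + t) = t with hGrid
    have hgrid_g : ∀ x, Grid (x - f x) := by
      intro x t h0 h1
      obtain ⟨y, hy⟩ := hsurj t h0 h1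
      have := hfe x y
      rw [hy] at this
      exact this
    have huniq : ∀ a b, Grid a → Grid b → a ≤ b → b < a + 1 → a = b := by
      intro a b ha hb hab hba
      have h1 : f b = b - a := by
        have := ha (b - a) (by linarith) (by linarith)
        rw [show a + (b - a) = b by ring] at this
        exact this
      have h2 : f b = 0 := by
        have := hb 0 le_rfl one_pos
        rw [add_zero] at this
        exact this
      linarith [h1, h2]
    have hup : ∀ a, Grid a → Grid (a + 1) := by
      intro a ha
      have hm1 := (hmem (a + 1)).1
      have hm2 := (hmem (a + 1)).2
      obtain ⟨w, hw, hg⟩ : ∃ w, w = a + 1 - f (a + 1) ∧ Grid w :=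
        ⟨_, rfl, hgrid_g (a + 1)⟩
      have hwa : a < w := by linarith
      have hwle : w ≤ a + 1 := by linarith
      have : w = a + 1 := by
        by_contra hne
        have hlt : w < a + 1 := lt_of_le_of_ne hwle hne
        have := huniq a w ha hg (le_of_lt hwa) hlt
        linarith
      rwa [this] at hg
    have hdown : ∀ a, Grid a → Grid (a - 1) := by
      intro a ha
      have hm1 := (hmem (a - 1/2)).1
      have hm2 := (hmem (a - 1/2)).2
      obtain ⟨w, hw, hg⟩ : ∃ w, w = a - 1/2 - f (a - 1/2) ∧ Grid w :=
        ⟨_, rfl, hgrid_g (a - 1/2)⟩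
      have hw1 : a - 3/2 < w := by linarith
      have hw2 : w ≤ a - 1/2 := by linarith
      have hgw1 : Grid (w + 1) := hup w hg
      have hkey : w + 1 = a := by
        rcases le_or_gt (w + 1) a with h | h
        · exact huniq (w + 1) a hgw1 ha h (by linarith)
        · exact (huniq a (w + 1) ha hgw1 (le_of_lt h) (by linarith)).symm
      have : a - 1 = w := by linarith
      rwa [this]
    -- base grid point
    set c : ℝ := -f 0 with hc
    have hgc : Grid c := by
      have := hgrid_g 0
      rw [show (0:ℝ) - f 0 = c by rw [hc]; ring] at this
      exact this
    -- all integer translates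
    have hgridn : ∀ n : ℤ, Grid (c + n) := by
      intro n
      induction n using Int.induction_on with
      | zero => simpa using hgc
      | succ k ih =>
          have e : c + ((((k:ℕ):ℤ) + 1 : ℤ) : ℝ) = c + ((k:ℕ):ℤ) + 1 := by
            push_cast; ring
          rw [e]
          exact hup _ ih
      | pred k ih =>
          have e : c + ((-((k:ℕ):ℤ) - 1 : ℤ) : ℝ) = c + (-((k:ℕ):ℤ) : ℤ) - 1 := by
            push_cast; ring
          rw [e]
          exact hdown _ ih
    refine ⟨c, fun x => ?_⟩
    have hg := hgridn ⌊x - c⌋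
    have h0 : (0:ℝ) ≤ Int.fract (x - c) := Int.fract_nonneg _
    have h1 : Int.fract (x - c) < 1 := Int.fract_lt_one _
    have := hg (Int.fract (x - c)) h0 h1
    rw [show c + (⌊x - c⌋ : ℝ) + Int.fract (x - c) = x by
      rw [Int.fract]; ring] at this
    exact this
  · rintro ⟨c, hf⟩
    constructor
    · intro x y
      rw [hf, hf, hf]
      rw [show x - Int.fract (x - c) + Int.fract (y - c) - c
            = (⌊x - c⌋ : ℝ) + Int.fract (y - c) by rw [Int.fract]; ring]
      rw [Int.fract_intCast_add, Int.fract_fract]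
    · ext t
      simp only [Set.mem_range, Set.mem_Ico]
      constructor
      · rintro ⟨x, rfl⟩
        rw [hf]
        exact ⟨Int.fract_nonneg _, Int.fract_lt_one _⟩
      · rintro ⟨h0, h1⟩
        exact ⟨t + c, by rw [hf]; simp [Int.fract_eq_self.2 ⟨h0, h1⟩]⟩
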